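/- The derivative operator D on cubical posets acts as a derivation with respect to products: for cubical posets K1 and K2, there is an isomorphism of posets D(K1 × K2) ≅ (DK1 × K2) ⊔ (K1 × DK2). -/

import Mathlib

/-- The three-element face poset `I = {0, 1, *}` of an interval. -/
def IntervalFace : Type := Option Bool

instance : PartialOrder IntervalFace where
  le a b := b = none ∨ a = b
  le_refl a := Or.inr rfl
  le_trans a b c hab hbc := by
    rcases hbc with h | h
    · exact Or.inl h
    · exact h ▸ hab
  le_antisymm a b hab hba := by
    rcases hab with h | h
    · rcases hba with h' | h'
      · rw [h, h']
      · exact h'.symm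
    · exact h

/-- `b` and `c` form an opposite pair: they are covered by their join and have no
meet. -/
def OppPair {α : Type*} [PartialOrder α] (b c : α) : Prop :=
  b ≠ c ∧ (∃ s : α, IsLUB {b, c} s ∧ b ⋖ s ∧ c ⋖ s) ∧ ¬ ∃ z : α, z ≤ b ∧ z ≤ c

/-- An unordered pair that is an opposite pair. -/
def OppSym {α : Type*} [PartialOrder α] (s : Sym2 α) : Prop :=
  ∃ b c : α, s = Sym2.mk b c ∧ OppPair b c

/-- The derivative complex `DK`: unordered opposite pairs `{b,c}` ordered
componentwise (the quotient of the ordered-pair poset `NK` by the swap). -/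
def DerivPoset (α : Type*) [PartialOrder α] : Type _ := {s : Sym2 α // OppSym s}

instance (α : Type*) [PartialOrder α] : PartialOrder (DerivPoset α) where
  le x y := ∃ b c b' c' : α,
    x.val = Sym2.mk b c ∧ y.val = Sym2.mk b' c' ∧ b ≤ b' ∧ c ≤ c'
  le_refl x := by
    obtain ⟨b, c, h, _⟩ := x.2
    exact ⟨b, c, b, c, h, h, le_refl b, le_refl c⟩
  le_trans x y z hxy hyz := by
    obtain ⟨b, c, b', c', hx, hy, h1, h2⟩ := hxy
    obtain ⟨e, f, e', f', hy', hz, h3, h4⟩ := hyz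
    rw [hy] at hy'
    rcases Sym2.eq_iff.mp hy' with ⟨hb, hc⟩ | ⟨hb, hc⟩
    · exact ⟨b, c, e', f', hx, hz, h1.trans (by rw [hb]; exact h3),
        h2.trans (by rw [hc]; exact h4)⟩
    · exact ⟨b, c, f', e', hx, by rw [hz, Sym2.eq_swap],
        h1.trans (by rw [hb]; exact h4), h2.trans (by rw [hc]; exact h3)⟩
  le_antisymm x y hxy hyx := by
    obtain ⟨b, c, b', c', hx, hy, h1, h2⟩ := hxy
    obtain ⟨e, f, e', f', hy', hx', h3, h4⟩ := hyx
    apply Subtype.ext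
    rw [hy] at hy'
    rw [hx] at hx'
    rw [hx, hy]
    rcases Sym2.eq_iff.mp hy' with ⟨hb, hc⟩ | ⟨hb, hc⟩ <;>
      rcases Sym2.eq_iff.mp hx' with ⟨hb', hc'⟩ | ⟨hb', hc'⟩
    · have h3' : b' ≤ b := by rw [hb, hb']; exact h3
      have h4' : c' ≤ c := by rw [hc, hc']; exact h4
      rw [le_antisymm h1 h3', le_antisymm h2 h4']
    · have h3' : b' ≤ c := by rw [hb, hc']; exact h3
      have h4' : c' ≤ b := by rw [hc, hb']; exact h4
      rw [le_antisymm h1 (h3'.trans (h2.trans h4')),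
        le_antisymm h2 (h4'.trans (h1.trans h3'))]
    · have h3' : c' ≤ b := by rw [hc, hb']; exact h3
      have h4' : b' ≤ c := by rw [hb, hc']; exact h4
      rw [le_antisymm h1 (h4'.trans (h2.trans h3')),
        le_antisymm h2 (h3'.trans (h1.trans h4'))]
    · have h3' : c' ≤ c := by rw [hc, hc']; exact h3
      have h4' : b' ≤ b := by rw [hb, hb']; exact h4
      rw [le_antisymm h1 h4', le_antisymm h2 h3']


private lemma derivPoset_le_iff {α : Type*} [PartialOrder α] {x y : DerivPoset α}
    {b c b' c' : α} (hx : x.val = Sym2.mk b c) (hy : y.val = Sym2.mk b' c') :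
    x ≤ y ↔ (b ≤ b' ∧ c ≤ c') ∨ (b ≤ c' ∧ c ≤ b') := by
  constructor
  · rintro ⟨e, f, e', f', he, he', h1, h2⟩
    rcases Sym2.eq_iff.mp (hx.symm.trans he) with ⟨hb, hc⟩ | ⟨hb, hc⟩ <;>
      rcases Sym2.eq_iff.mp (hy.symm.trans he') with ⟨hb', hc'⟩ | ⟨hb', hc'⟩ <;>
      subst hb <;> subst hc <;> subst hb' <;> subst hc' <;> tauto
  · rintro (⟨h1, h2⟩ | ⟨h1, h2⟩)
    · exact ⟨b, c, b', c', hx, hy, h1, h2⟩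
    · exact ⟨b, c, c', b', hx, by rw [hy, Sym2.eq_swap], h1, h2⟩

private lemma oppPair_prod_left {K1 K2 : Type*} [PartialOrder K1] [PartialOrder K2]
    {b c : K1} (h : OppPair b c) (y : K2) : OppPair (b, y) (c, y) := by
  obtain ⟨hne, ⟨s, hlub, hbs, hcs⟩, hnm⟩ := h
  refine ⟨fun h => hne (congrArg Prod.fst h), ⟨(s, y), ?_, ?_, ?_⟩, ?_⟩
  · rw [isLUB_prod]
    constructor
    · simpa [Set.image_pair] using hlub
    · simp only [Set.image_pair]
      simpa using isLUB_singleton (a := y)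
  · exact Prod.mk_covBy_mk_iff_left.mpr hbs
  · exact Prod.mk_covBy_mk_iff_left.mpr hcs
  · rintro ⟨⟨z1, z2⟩, hz1, hz2⟩
    exact hnm ⟨z1, hz1.1, hz2.1⟩

private lemma oppPair_prod_right {K1 K2 : Type*} [PartialOrder K1] [PartialOrder K2]
    {b c : K2} (h : OppPair b c) (y : K1) : OppPair (y, b) (y, c) := by
  obtain ⟨hne, ⟨s, hlub, hbs, hcs⟩, hnm⟩ := h
  refine ⟨fun h => hne (congrArg Prod.snd h), ⟨(y, s), ?_, ?_, ?_⟩, ?_⟩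
  · rw [isLUB_prod]
    constructor
    · simp only [Set.image_pair]
      simpa using isLUB_singleton (a := y)
    · simpa [Set.image_pair] using hlub
  · exact Prod.mk_covBy_mk_iff_right.mpr hbs
  · exact Prod.mk_covBy_mk_iff_right.mpr hcs
  · rintro ⟨⟨z1, z2⟩, hz1, hz2⟩
    exact hnm ⟨z2, hz1.2, hz2.2⟩

private def derivProdMap {K1 K2 : Type*} [PartialOrder K1] [PartialOrder K2]
    (x : DerivPoset K1 × K2 ⊕ K1 × DerivPoset K2) : DerivPoset (K1 × K2) :=
  match x with
  | .inl (d, y) => ⟨Sym2.map (fun a => (a, y)) d.val, by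
      obtain ⟨b, c, h, hp⟩ := d.2
      exact ⟨(b, y), (c, y), by rw [h, Sym2.map_pair_eq], oppPair_prod_left hp y⟩⟩
  | .inr (z, d) => ⟨Sym2.map (fun a => (z, a)) d.val, by
      obtain ⟨b, c, h, hp⟩ := d.2
      exact ⟨(z, b), (z, c), by rw [h, Sym2.map_pair_eq], oppPair_prod_right hp z⟩⟩

private lemma derivProdMap_le_iff {K1 K2 : Type*} [PartialOrder K1] [PartialOrder K2]
    (a b : DerivPoset K1 × K2 ⊕ K1 × DerivPoset K2) :
    derivProdMap a ≤ derivProdMap b ↔ a ≤ b := by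
  match a, b with
  | .inl (d, y), .inl (d', y') =>
    obtain ⟨e, f, h, hp⟩ := d.2
    obtain ⟨e', f', h', hp'⟩ := d'.2
    have hv : (derivProdMap (.inl (d, y) : DerivPoset K1 × K2 ⊕ K1 × DerivPoset K2)).val
        = Sym2.mk (e, y) (f, y) := by
      simp [derivProdMap, h, Sym2.map_pair_eq]
    have hv' : (derivProdMap (.inl (d', y') : DerivPoset K1 × K2 ⊕ K1 × DerivPoset K2)).val
        = Sym2.mk (e', y') (f', y') := by
      simp [derivProdMap, h', Sym2.map_pair_eq]
    rw [derivPoset_le_iff hv hv', Sum.inl_le_inl_iff]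
    simp only [Prod.mk_le_mk]
    rw [derivPoset_le_iff h h']
    constructor
    · rintro (⟨⟨h1, h2⟩, h3, h4⟩ | ⟨⟨h1, h2⟩, h3, h4⟩)
      · exact ⟨Or.inl ⟨h1, h3⟩, h2⟩
      · exact ⟨Or.inr ⟨h1, h3⟩, h2⟩
    · rintro ⟨(⟨h1, h3⟩ | ⟨h1, h3⟩), h2⟩
      · exact Or.inl ⟨⟨h1, h2⟩, h3, h2⟩
      · exact Or.inr ⟨⟨h1, h2⟩, h3, h2⟩
  | .inl (d, y), .inr (z, d') =>
    obtain ⟨e, f, h, hp⟩ := d.2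
    obtain ⟨e', f', h', hp'⟩ := d'.2
    have hv : (derivProdMap (.inl (d, y) : DerivPoset K1 × K2 ⊕ K1 × DerivPoset K2)).val
        = Sym2.mk (e, y) (f, y) := by
      simp [derivProdMap, h, Sym2.map_pair_eq]
    have hv' : (derivProdMap (.inr (z, d') : DerivPoset K1 × K2 ⊕ K1 × DerivPoset K2)).val
        = Sym2.mk (z, e') (z, f') := by
      simp [derivProdMap, h', Sym2.map_pair_eq]
    rw [derivPoset_le_iff hv hv']
    constructor
    · rintro (⟨h1, h2⟩ | ⟨h1, h2⟩)
      · exact (hp'.2.2 ⟨y, h1.2, h2.2⟩).elim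
      · exact (hp'.2.2 ⟨y, h2.2, h1.2⟩).elim
    · exact fun hc => absurd hc Sum.not_inl_le_inr
  | .inr (z, d), .inl (d', y) =>
    obtain ⟨e, f, h, hp⟩ := d.2
    obtain ⟨e', f', h', hp'⟩ := d'.2
    have hv : (derivProdMap (.inr (z, d) : DerivPoset K1 × K2 ⊕ K1 × DerivPoset K2)).val
        = Sym2.mk (z, e) (z, f) := by
      simp [derivProdMap, h, Sym2.map_pair_eq]
    have hv' : (derivProdMap (.inl (d', y) : DerivPoset K1 × K2 ⊕ K1 × DerivPoset K2)).val
        = Sym2.mk (e', y) (f', y) := by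
      simp [derivProdMap, h', Sym2.map_pair_eq]
    rw [derivPoset_le_iff hv hv']
    constructor
    · rintro (⟨h1, h2⟩ | ⟨h1, h2⟩)
      · exact (hp'.2.2 ⟨z, h1.1, h2.1⟩).elim
      · exact (hp'.2.2 ⟨z, h2.1, h1.1⟩).elim
    · exact fun hc => absurd hc Sum.not_inr_le_inl
  | .inr (z, d), .inr (z', d') =>
    obtain ⟨e, f, h, hp⟩ := d.2
    obtain ⟨e', f', h', hp'⟩ := d'.2
    have hv : (derivProdMap (.inr (z, d) : DerivPoset K1 × K2 ⊕ K1 × DerivPoset K2)).val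
        = Sym2.mk (z, e) (z, f) := by
      simp [derivProdMap, h, Sym2.map_pair_eq]
    have hv' : (derivProdMap (.inr (z', d') : DerivPoset K1 × K2 ⊕ K1 × DerivPoset K2)).val
        = Sym2.mk (z', e') (z', f') := by
      simp [derivProdMap, h', Sym2.map_pair_eq]
    rw [derivPoset_le_iff hv hv', Sum.inr_le_inr_iff]
    simp only [Prod.mk_le_mk]
    rw [derivPoset_le_iff h h']
    constructor
    · rintro (⟨⟨h1, h2⟩, h3, h4⟩ | ⟨⟨h1, h2⟩, h3, h4⟩)
      · exact ⟨h1, Or.inl ⟨h2, h4⟩⟩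
      · exact ⟨h1, Or.inr ⟨h2, h4⟩⟩
    · rintro ⟨h1, (⟨h2, h4⟩ | ⟨h2, h4⟩)⟩
      · exact Or.inl ⟨⟨h1, h2⟩, h1, h4⟩
      · exact Or.inr ⟨⟨h1, h2⟩, h1, h4⟩

private lemma derivProdMap_surjective {K1 K2 : Type*} [PartialOrder K1] [PartialOrder K2] :
    Function.Surjective (derivProdMap (K1 := K1) (K2 := K2)) := by
  intro x
  obtain ⟨⟨b1, b2⟩, ⟨c1, c2⟩, hx, hne, ⟨⟨s1, s2⟩, hlub, hbs, hcs⟩, hnm⟩ := x.2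
  rcases Prod.mk_covBy_mk_iff.mp hbs with ⟨hb1, hb2⟩ | ⟨hb2, hb1⟩ <;>
    rcases Prod.mk_covBy_mk_iff.mp hcs with ⟨hc1, hc2⟩ | ⟨hc2, hc1⟩
  · -- both covers in first coordinate
    have hcc : c2 = b2 := hc2.trans hb2.symm
    subst hcc
    have hopp : OppPair b1 c1 := by
      refine ⟨fun h => hne (by rw [h]), ?_, ?_⟩
      · refine ⟨s1, ?_, hb1, hc1⟩
        have := ((isLUB_prod (s := {(b1, c2), (c1, c2)}) (p := (s1, s2))).mp hlub).1
        simpa [Set.image_pair] using this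
      · rintro ⟨z, hz1, hz2⟩
        exact hnm ⟨(z, c2), ⟨hz1, le_refl c2⟩, ⟨hz2, le_refl c2⟩⟩
    refine ⟨.inl (⟨Sym2.mk b1 c1, b1, c1, rfl, hopp⟩, c2), ?_⟩
    apply Subtype.ext
    rw [hx]
    simp [derivProdMap, Sym2.map_pair_eq]
  · -- mixed: contradiction
    exact (hnm ⟨(b1, c2), ⟨le_refl b1, by rw [hb2]; exact hc2.le⟩,
      ⟨by rw [hc1]; exact hb1.le, le_refl c2⟩⟩).elim
  · -- mixed: contradiction
    exact (hnm ⟨(c1, b2), ⟨by rw [hb1]; exact hc1.le, le_refl b2⟩,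
      ⟨le_refl c1, by rw [hc2]; exact hb2.le⟩⟩).elim
  · -- both covers in second coordinate
    have hcc : c1 = b1 := hc1.trans hb1.symm
    subst hcc
    have hopp : OppPair b2 c2 := by
      refine ⟨fun h => hne (by rw [h]), ?_, ?_⟩
      · refine ⟨s2, ?_, hb2, hc2⟩
        have := ((isLUB_prod (s := {(c1, b2), (c1, c2)}) (p := (s1, s2))).mp hlub).2
        simpa [Set.image_pair] using this
      · rintro ⟨z, hz1, hz2⟩
        exact hnm ⟨(c1, z), ⟨le_refl c1, hz1⟩, ⟨le_refl c1, hz2⟩⟩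
    refine ⟨.inr (c1, ⟨Sym2.mk b2 c2, b2, c2, rfl, hopp⟩), ?_⟩
    apply Subtype.ext
    rw [hx]
    simp [derivProdMap, Sym2.map_pair_eq]

/-- The derivative operator acts as a derivation:
`D(K1 × K2) ≅ (DK1 × K2) ⊔ (K1 × DK2)` for cubical posets `K1`, `K2`. -/
theorem derivative_of_product {K1 K2 : Type*} [PartialOrder K1] [PartialOrder K2]
    (rank1 : K1 → ℕ) (rank2 : K2 → ℕ)
    (hcub1 : ∀ x : K1, Nonempty (Set.Iic x ≃o (Fin (rank1 x) → IntervalFace)))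
    (hcub2 : ∀ x : K2, Nonempty (Set.Iic x ≃o (Fin (rank2 x) → IntervalFace))) :
    Nonempty (DerivPoset (K1 × K2) ≃o (DerivPoset K1 × K2 ⊕ K1 × DerivPoset K2)) := by
  refine ⟨(RelIso.ofSurjective (OrderEmbedding.ofMapLEIff derivProdMap derivProdMap_le_iff) ?_).symm⟩
  intro x
  obtain ⟨a, ha⟩ := derivProdMap_surjective x
  exact ⟨a, ha⟩
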